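/- Let P be an X–Y linkage in a graph G and let H be a subgraph of G. If G contains t pairwise disjoint H–(X ∪ Y) paths, then G contains an H–P comb consisting of at least t paths. -/

import Mathlib

open SimpleGraph

section Defs
variable {V : Type*}

/-- `G` has a `K_p` minor: `p` disjoint nonempty connected branch sets pairwise joined by edges. -/
def HasCliqueMinor (G : SimpleGraph V) (p : ℕ) : Prop :=
  ∃ B : Fin p → Set V,
    (∀ i, (B i).Nonempty) ∧
    (∀ i, (G.induce (B i)).Connected) ∧
    (Pairwise fun i j => Disjoint (B i) (B j)) ∧
    (Pairwise fun i j => ∃ u ∈ B i, ∃ v ∈ B j, G.Adj u v)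

/-- `G` contains `k` pairwise vertex-disjoint instances of a `K_p` minor. -/
def HasDisjointCliqueMinors (G : SimpleGraph V) (p k : ℕ) : Prop :=
  ∃ S : Fin k → Set V,
    (Pairwise fun i j => Disjoint (S i) (S j)) ∧
    ∀ i, HasCliqueMinor (G.induce (S i)) p

/-- `H` is a minor of `G` (branch-set / minor-model definition). -/
def HasMinor {W : Type*} (G : SimpleGraph V) (H : SimpleGraph W) : Prop :=
  ∃ B : W → Set V,
    (∀ w, (B w).Nonempty) ∧
    (∀ w, (G.induce (B w)).Connected) ∧
    (Pairwise fun w w' => Disjoint (B w) (B w')) ∧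
    (∀ w w', H.Adj w w' → ∃ u ∈ B w, ∃ v ∈ B w', G.Adj u v)

/-- `(Gt, W)` is a tree decomposition of `G`. -/
def IsTreeDecomp {T : Type*} (G : SimpleGraph V) (Gt : SimpleGraph T) (W : T → Set V) : Prop :=
  Gt.IsTree ∧
  (∀ v : V, ∃ t, v ∈ W t) ∧
  (∀ u v : V, G.Adj u v → ∃ t, u ∈ W t ∧ v ∈ W t) ∧
  (∀ v : V, (Gt.induce {t | v ∈ W t}).Connected)

/-- `G` has tree-width `< w`, i.e. a tree decomposition with all bags of size `≤ w`. -/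
def TreewidthLt (G : SimpleGraph V) (w : ℕ) : Prop :=
  ∃ (T : Type) (Gt : SimpleGraph T) (W : T → Set V),
    IsTreeDecomp G Gt W ∧ ∀ t, (W t).Finite ∧ (W t).ncard ≤ w

/-- `G` has path-width at most `w`. -/
def PathwidthLe (G : SimpleGraph V) (w : ℕ) : Prop :=
  ∃ (n : ℕ) (W : Fin (n+1) → Set V),
    (∀ v, ∃ i, v ∈ W i) ∧
    (∀ u v, G.Adj u v → ∃ i, u ∈ W i ∧ v ∈ W i) ∧
    (∀ v (i j k : Fin (n+1)), i ≤ j → j ≤ k → v ∈ W i → v ∈ W k → v ∈ W j) ∧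
    (∀ i, (W i).Finite ∧ (W i).ncard ≤ w + 1)

/-- An `X`–`Y` linkage of order `t` in `G`: `t` disjoint `X`–`Y` paths meeting all of `X ∪ Y`. -/
structure Linkage (G : SimpleGraph V) (X Y : Set V) (t : ℕ) where
  first : Fin t → V
  last : Fin t → V
  walk : ∀ i, G.Walk (first i) (last i)
  isPath : ∀ i, (walk i).IsPath
  firstMem : ∀ i, first i ∈ X
  lastMem : ∀ i, last i ∈ Y
  innerCond : ∀ i v, v ∈ (walk i).support → v ∈ X ∪ Y → v = first i ∨ v = last i
  disjointCond : ∀ i j, i ≠ j → ∀ v, v ∈ (walk i).support → v ∉ (walk j).support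
  coverX : ∀ x ∈ X, ∃ i, first i = x
  coverY : ∀ y ∈ Y, ∃ i, last i = y

/-- The collection of vertex sets of the paths of a linkage. -/
def Linkage.pathSets {G : SimpleGraph V} {X Y : Set V} {t : ℕ} (L : Linkage G X Y t) :
    Set (Set V) := {s | ∃ i, s = {v | v ∈ (L.walk i).support}}

/-- A linkage is singular if it covers all of `V(G)` and `G` has no other `X`–`Y` linkage. -/
def Linkage.Singular {G : SimpleGraph V} {X Y : Set V} {t : ℕ} (L : Linkage G X Y t) : Prop :=
  (∀ v : V, ∃ i, v ∈ (L.walk i).support) ∧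
  ∀ (t' : ℕ) (L' : Linkage G X Y t'), L'.pathSets = L.pathSets

/-- A cycle in `G`. -/
structure CycleIn (G : SimpleGraph V) where
  base : V
  walk : G.Walk base base
  isCycle : walk.IsCycle

def CycleIn.verts {G : SimpleGraph V} (C : CycleIn G) : Set V := {v | v ∈ C.walk.support}

/-- Concentric cycles: pairwise disjoint, and each middle cycle separates inner from outer. -/
def Concentric {G : SimpleGraph V} {s : ℕ} (C : Fin s → CycleIn G) : Prop :=
  (Pairwise fun i j => Disjoint (C i).verts (C j).verts) ∧
  ∀ (i j k : Fin s), i < j → j < k →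
    ∀ (u v : V), u ∈ (C i).verts → v ∈ (C k).verts →
      ∀ w : G.Walk u v, ∃ x ∈ (C j).verts, x ∈ w.support

/-- A walk is orthogonal to the (vertex sets of) cycles `D 1, …, D s`: it meets each `D i` in a
nonempty contiguous segment, and these segments appear in order (or in reverse order). -/
def WalkOrthS {G : SimpleGraph V} {x y : V} (w : G.Walk x y) {s : ℕ}
    (D : Fin s → Set V) : Prop :=
  ∃ a b : Fin s → ℕ,
    (∀ i, a i ≤ b i) ∧ (∀ i, b i < w.support.length) ∧
    ((∀ i j : Fin s, i < j → b i < a j) ∨ (∀ i j : Fin s, i < j → b j < a i)) ∧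
    (∀ (i : Fin s) (n : ℕ) (hn : n < w.support.length),
      w.support.get ⟨n, hn⟩ ∈ D i ↔ (a i ≤ n ∧ n ≤ b i))

/-- `v` is the first vertex of the list `l` lying in `S`. -/
def firstIn (l : List V) (S : Set V) (v : V) : Prop :=
  ∃ l₁ l₂, l = l₁ ++ v :: l₂ ∧ v ∈ S ∧ ∀ u ∈ l₁, u ∉ S

/-- An `A`–`L` comb (`A` playing the role of the vertex set of the subgraph `H`): disjoint paths
starting in `A` (with no further vertex in `A`) and ending on `⋃ L`, such that the set of
endvertices of the `(Q,H)`-segments of the paths of `L` equals the set of last vertices. -/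
structure Comb {G : SimpleGraph V} {X Y : Set V} {t : ℕ}
    (A : Set V) (L : Linkage G X Y t) (m : ℕ) where
  first : Fin m → V
  last : Fin m → V
  walk : ∀ i, G.Walk (first i) (last i)
  isPath : ∀ i, (walk i).IsPath
  firstMem : ∀ i, first i ∈ A
  onlyFirstInA : ∀ i v, v ∈ (walk i).support → v ∈ A → v = first i
  endsOnL : ∀ i, ∃ j, last i ∈ (L.walk j).support
  disjointCond : ∀ i j, i ≠ j → ∀ v, v ∈ (walk i).support → v ∉ (walk j).support
  combCond :
    {v | ∃ j, firstIn ((L.walk j).support) ((⋃ i, {u | u ∈ (walk i).support}) ∪ A) v ∨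
          firstIn ((L.walk j).support).reverse ((⋃ i, {u | u ∈ (walk i).support}) ∪ A) v}
      = Set.range last

/-- `G` is `m`-connected. -/
def IsKConnected (G : SimpleGraph V) (m : ℕ) : Prop :=
  m < Nat.card V ∧ ∀ S : Set V, S.Finite → S.ncard < m → (G.induce Sᶜ).Connected

end Defs

section Fans

/-- Adjacency of the fan `F(l,n)`: the ladder `L(l)` on the `u`- and `v`-paths together with
`n` independent vertices joined to all of the `v`-path. -/
def fanAdj (l n : ℕ) : (Fin l ⊕ (Fin l ⊕ Fin n)) → (Fin l ⊕ (Fin l ⊕ Fin n)) → Prop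
  | Sum.inl i, Sum.inl j => i.val + 1 = j.val
  | Sum.inl i, Sum.inr (Sum.inl j) => i = j
  | Sum.inr (Sum.inl i), Sum.inr (Sum.inl j) => i.val + 1 = j.val
  | Sum.inr (Sum.inl _), Sum.inr (Sum.inr _) => True
  | _, _ => False

/-- The fan `F(l, n)`. -/
def fanGraph (l n : ℕ) : SimpleGraph (Fin l ⊕ (Fin l ⊕ Fin n)) :=
  SimpleGraph.fromRel (fanAdj l n)

/-- The `n × n` grid graph. -/
def gridGraph (n : ℕ) : SimpleGraph (Fin n × Fin n) :=
  SimpleGraph.fromRel (fun a b =>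
    (a.1 = b.1 ∧ a.2.val + 1 = b.2.val) ∨ (a.2 = b.2 ∧ a.1.val + 1 = b.1.val))

end Fans

section Embed
variable {V : Type*} [Fintype V] [DecidableEq V]

/-- Reversal of darts, as a permutation. -/
def dartRev (G : SimpleGraph V) : Equiv.Perm G.Dart :=
  ⟨SimpleGraph.Dart.symm, SimpleGraph.Dart.symm,
    fun d => SimpleGraph.Dart.symm_symm d, fun d => SimpleGraph.Dart.symm_symm d⟩

/-- The Euler characteristic of the (orientable) combinatorial embedding of `G` given by the
rotation system `ρ`: `n - e + f`, corrected so that all components live in one surface. -/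
noncomputable def eulerChar (G : SimpleGraph V) [DecidableRel G.Adj]
    (ρ : Equiv.Perm G.Dart) : ℤ :=
  (Fintype.card V : ℤ) - (G.edgeFinset.card : ℤ)
    + (Nat.card (Quotient (MulAction.orbitRel
        (Subgroup.zpowers ((dartRev G).trans ρ)) G.Dart)) : ℤ)
    - 2 * ((Nat.card G.ConnectedComponent : ℤ) - 1)

/-- `G` is embeddable in an (orientable) surface of Euler characteristic `χ`: it has a rotation
system (a permutation of the darts preserving tails) whose Euler characteristic is at least `χ`. -/
def EmbeddableEuler (G : SimpleGraph V) [DecidableRel G.Adj] (χ : ℤ) : Prop :=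
  ∃ ρ : Equiv.Perm G.Dart, (∀ d : G.Dart, (ρ d).toProd.1 = d.toProd.1) ∧ χ ≤ eulerChar G ρ

end Embed

section CombAux

namespace Stmt6Aux

variable {V : Type*}

lemma firstIn_mem {l : List V} {S : Set V} {v : V} (h : firstIn l S v) : v ∈ l := by
  obtain ⟨l₁, l₂, rfl, -, -⟩ := h
  simp

lemma firstIn_memS {l : List V} {S : Set V} {v : V} (h : firstIn l S v) : v ∈ S := by
  obtain ⟨l₁, l₂, rfl, h, -⟩ := h
  exact h

lemma firstIn_mono {l : List V} {S S' : Set V} {v : V} (h : firstIn l S v)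
    (hv : v ∈ S') (hss : S' ⊆ S) : firstIn l S' v := by
  obtain ⟨l₁, l₂, rfl, -, h₁⟩ := h
  exact ⟨l₁, l₂, rfl, hv, fun u hu hu' => h₁ u hu (hss hu')⟩

lemma firstIn_head {l : List V} {S : Set V} {v : V} (hv : v ∈ S) : firstIn (v :: l) S v :=
  ⟨[], l, rfl, hv, by simp⟩

/-- A bundled path for building combs. -/
structure APath {V : Type*} (G : SimpleGraph V) where
  a : V
  b : V
  w : G.Walk a b

open SimpleGraph

/-- The set of candidate comb-endpoints: first vertices (from either side) of linkage
paths in `U`. -/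
def lhsSet {G : SimpleGraph V} {X Y : Set V} {t' : ℕ} (L : Linkage G X Y t') (U : Set V) :
    Set V :=
  {v | ∃ j, firstIn ((L.walk j).support) U v ∨ firstIn ((L.walk j).support).reverse U v}

/-- The union of the supports of a family of paths. -/
def famSupp {G : SimpleGraph V} {m : ℕ} (p : Fin m → APath G) : Set V :=
  ⋃ k, {u | u ∈ (p k).w.support}

/-- The union of supports of the linkage paths. -/
def LSupp {G : SimpleGraph V} {X Y : Set V} {t' : ℕ} (L : Linkage G X Y t') : Set V :=
  ⋃ j, {v | v ∈ (L.walk j).support}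

lemma LSupp_finite {G : SimpleGraph V} {X Y : Set V} {t' : ℕ} (L : Linkage G X Y t') :
    (LSupp L).Finite :=
  Set.finite_iUnion fun j => List.finite_toSet _

lemma famSupp_finite {G : SimpleGraph V} {m : ℕ} (p : Fin m → APath G) :
    (famSupp p).Finite :=
  Set.finite_iUnion fun k => List.finite_toSet _

lemma mem_famSupp {G : SimpleGraph V} {m : ℕ} {p : Fin m → APath G} {u : V} :
    u ∈ famSupp p ↔ ∃ k, u ∈ (p k).w.support := by
  simp [famSupp]

lemma lhs_memU {G : SimpleGraph V} {X Y : Set V} {t' : ℕ} {L : Linkage G X Y t'} {U : Set V}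
    {v : V} (h : v ∈ lhsSet L U) : v ∈ U := by
  obtain ⟨j, h | h⟩ := h <;> exact firstIn_memS h

lemma lhs_onL {G : SimpleGraph V} {X Y : Set V} {t' : ℕ} {L : Linkage G X Y t'} {U : Set V}
    {v : V} (h : v ∈ lhsSet L U) : ∃ j, v ∈ (L.walk j).support := by
  obtain ⟨j, h | h⟩ := h
  · exact ⟨j, firstIn_mem h⟩
  · exact ⟨j, List.mem_reverse.mp (firstIn_mem h)⟩

lemma lhs_subset_LSupp {G : SimpleGraph V} {X Y : Set V} {t' : ℕ} {L : Linkage G X Y t'}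
    {U : Set V} : lhsSet L U ⊆ LSupp L := by
  intro v hv
  obtain ⟨j, hj⟩ := lhs_onL hv
  exact Set.mem_iUnion.mpr ⟨j, hj⟩

lemma lhs_mono {G : SimpleGraph V} {X Y : Set V} {t' : ℕ} {L : Linkage G X Y t'}
    {U U' : Set V} {v : V} (h : v ∈ lhsSet L U) (hv : v ∈ U') (hss : U' ⊆ U) :
    v ∈ lhsSet L U' := by
  obtain ⟨j, hj | hj⟩ := h
  · exact ⟨j, Or.inl (firstIn_mono hj hv hss)⟩
  · exact ⟨j, Or.inr (firstIn_mono hj hv hss)⟩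

lemma support_loop {G : SimpleGraph V} {x : V} (p : G.Walk x x) (hp : p.IsPath) :
    p.support = [x] := by
  cases p with
  | nil => simp
  | cons h q =>
    exfalso
    have h1 : x ∈ q.support := q.end_mem_support
    have h2 := hp.support_nodup
    rw [SimpleGraph.Walk.support_cons] at h2
    exact (List.nodup_cons.mp h2).1 h1

lemma support_eq_single {G : SimpleGraph V} {x y : V} (p : G.Walk x y) (hp : p.IsPath)
    (h : x = y) : p.support = [x] := by
  subst h
  exact support_loop p hp

lemma end_not_mem_takeUntil [DecidableEq V] {G : SimpleGraph V} {x y v : V} (p : G.Walk x y)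
    (hp : p.IsPath) (hv : v ∈ p.support) (hne : v ≠ y) :
    y ∉ (p.takeUntil v hv).support := by
  intro hy
  have hsup : p.support = (p.takeUntil v hv).support ++ (p.dropUntil v hv).support.tail := by
    conv_lhs => rw [← p.take_spec hv]
    rw [SimpleGraph.Walk.support_append]
  have hnd := hp.support_nodup
  rw [hsup] at hnd
  have hdisj := List.disjoint_of_nodup_append hnd
  have hy2 : y ∈ (p.dropUntil v hv).support.tail := by
    have h3 : y ∈ (p.dropUntil v hv).support := SimpleGraph.Walk.end_mem_support _
    rw [SimpleGraph.Walk.support_eq_cons] at h3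
    rcases List.mem_cons.mp h3 with h4 | h4
    · exact absurd h4.symm hne
    · exact h4
  exact hdisj hy hy2

lemma meas_lt {c₁' c₁ c₂' c₂ N n : ℕ} (h1 : c₁' < c₁) (h2 : c₂' ≤ N)
    (h3 : c₁ * (N + 1) + c₂ ≤ n) : c₁' * (N + 1) + c₂' < n := by
  have h4 : c₁' * (N + 1) + c₂' < (c₁' + 1) * (N + 1) := by
    rw [Nat.succ_mul]; omega
  have h5 : (c₁' + 1) * (N + 1) ≤ c₁ * (N + 1) := Nat.mul_le_mul_right _ h1
  omega

end Stmt6Aux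

end CombAux

namespace Stmt6Aux

open SimpleGraph

/-- Replacing the `i`-th path of a family by a sub-path of it whose end is still a candidate
endpoint, in such a way that the old end leaves the support union, strictly decreases the
support measure while preserving all invariants. -/
lemma update_step {V : Type} {G : SimpleGraph V} {X Y : Set V} {t' : ℕ} (L : Linkage G X Y t')
    (A : Set V) {m : ℕ} (p : Fin m → APath G) (i : Fin m)
    (hpath : ∀ k, (p k).w.IsPath) (ha : ∀ k, (p k).a ∈ A)
    (honly : ∀ k u, u ∈ (p k).w.support → u ∈ A → u = (p k).a)
    (hdisj : ∀ k l, k ≠ l → ∀ u, u ∈ (p k).w.support → u ∉ (p l).w.support)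
    (hinv : ∀ k, (p k).b ∈ lhsSet L (famSupp p ∪ A))
    (q : APath G)
    (hqpath : q.w.IsPath) (hqa : q.a ∈ A)
    (hqonly : ∀ u, u ∈ q.w.support → u ∈ A → u = q.a)
    (hqsub : ∀ u, u ∈ q.w.support → u ∈ (p i).w.support)
    (hqb : q.b ∈ lhsSet L (famSupp p ∪ A))
    (hbA : (p i).b ∉ A) (hbq : (p i).b ∉ q.w.support) :
    ∃ p' : Fin m → APath G,
      (∀ k, (p' k).w.IsPath) ∧ (∀ k, (p' k).a ∈ A) ∧
      (∀ k u, u ∈ (p' k).w.support → u ∈ A → u = (p' k).a) ∧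
      (∀ k l, k ≠ l → ∀ u, u ∈ (p' k).w.support → u ∉ (p' l).w.support) ∧
      (∀ k, (p' k).b ∈ lhsSet L (famSupp p' ∪ A)) ∧
      (famSupp p' \ A).ncard < (famSupp p \ A).ncard := by
  classical
  refine ⟨Function.update p i q, ?_, ?_, ?_, ?_, ?_, ?_⟩
  case _ =>
    intro k
    by_cases hk : k = i
    · subst hk; rw [Function.update_self]; exact hqpath
    · rw [Function.update_of_ne hk]; exact hpath k
  case _ =>
    intro k
    by_cases hk : k = i
    · subst hk; rw [Function.update_self]; exact hqa
    · rw [Function.update_of_ne hk]; exact ha k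
  case _ =>
    intro k u hu huA
    by_cases hk : k = i
    · subst hk; rw [Function.update_self] at hu ⊢; exact hqonly u hu huA
    · rw [Function.update_of_ne hk] at hu ⊢; exact honly k u hu huA
  all_goals
    have hps : ∀ k u, u ∈ ((Function.update p i q) k).w.support → u ∈ (p k).w.support := by
      intro k u hu
      by_cases hk : k = i
      · subst hk; rw [Function.update_self] at hu; exact hqsub u hu
      · rwa [Function.update_of_ne hk] at hu
  all_goals
    have hfs : famSupp (Function.update p i q) ⊆ famSupp p := by
      intro u hu
      obtain ⟨k, hk⟩ := mem_famSupp.mp hu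
      exact mem_famSupp.mpr ⟨k, hps k u hk⟩
  case _ =>
    intro k l hkl u hu hul
    exact hdisj k l hkl u (hps k u hu) (hps l u hul)
  case _ =>
    intro k
    have hbU' : ((Function.update p i q) k).b ∈ famSupp (Function.update p i q) ∪ A :=
      Or.inl (mem_famSupp.mpr ⟨k, Walk.end_mem_support _⟩)
    have hss : famSupp (Function.update p i q) ∪ A ⊆ famSupp p ∪ A := by
      rintro x (hx | hx)
      · exact Or.inl (hfs hx)
      · exact Or.inr hx
    by_cases hk : k = i
    · subst hk
      refine lhs_mono ?_ hbU' hss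
      rw [Function.update_self]
      exact hqb
    · refine lhs_mono ?_ hbU' hss
      rw [Function.update_of_ne hk]
      exact hinv k
  case _ =>
    have hbmem : (p i).b ∈ famSupp p \ A :=
      ⟨mem_famSupp.mpr ⟨i, Walk.end_mem_support _⟩, hbA⟩
    have hbnot : (p i).b ∉ famSupp (Function.update p i q) := by
      intro hcon
      obtain ⟨k, hk⟩ := mem_famSupp.mp hcon
      by_cases hki : k = i
      · subst hki; rw [Function.update_self] at hk; exact hbq hk
      · rw [Function.update_of_ne hki] at hk
        exact hdisj i k (fun h => hki h.symm) (p i).b (Walk.end_mem_support _) hk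
    refine Set.ncard_lt_ncard ?_ ((famSupp_finite p).diff)
    refine (Set.ssubset_iff_of_subset (Set.diff_subset_diff_left hfs)).mpr
      ⟨(p i).b, hbmem, fun h => hbnot h.1⟩

/-- Main induction: from a family of disjoint `A`-paths whose ends are candidate comb
endpoints, produce a comb with at least as many teeth. -/
lemma key {V : Type} {G : SimpleGraph V} {X Y : Set V} {t' : ℕ} (L : Linkage G X Y t')
    (A : Set V) :
    ∀ n m (p : Fin m → APath G),
      (∀ k, (p k).w.IsPath) →
      (∀ k, (p k).a ∈ A) →
      (∀ k u, u ∈ (p k).w.support → u ∈ A → u = (p k).a) →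
      (∀ k l, k ≠ l → ∀ u, u ∈ (p k).w.support → u ∉ (p l).w.support) →
      (∀ k, (p k).b ∈ lhsSet L (famSupp p ∪ A)) →
      (famSupp p \ A).ncard * ((LSupp L).ncard + 1)
        + ((lhsSet L (famSupp p ∪ A)) \ Set.range fun k => (p k).b).ncard ≤ n →
      ∃ m', m ≤ m' ∧ Nonempty (Comb A L m') := by
  classical
  intro n
  induction n using Nat.strong_induction_on with
  | _ n IH =>
  intro m p hpath ha honly hdisj hinv hmeas
  by_cases hgoal : lhsSet L (famSupp p ∪ A) ⊆ Set.range fun k => (p k).b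
  · refine ⟨m, le_refl m, ⟨⟨fun k => (p k).a, fun k => (p k).b, fun k => (p k).w,
      hpath, ha, honly, fun k => lhs_onL (hinv k), hdisj, ?_⟩⟩⟩
    apply Set.Subset.antisymm
    · exact hgoal
    · rintro x ⟨k, rfl⟩
      exact hinv k
  · obtain ⟨v, hvl, hvr⟩ := Set.not_subset.mp hgoal
    have hvU : v ∈ famSupp p ∪ A := lhs_memU hvl
    have hvb : ∀ k, v ≠ (p k).b := fun k h => hvr ⟨k, h.symm⟩
    have hviolbound : ∀ (m₀ : ℕ) (p₀ : Fin m₀ → APath G),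
        ((lhsSet L (famSupp p₀ ∪ A)) \ Set.range fun k => (p₀ k).b).ncard
          ≤ (LSupp L).ncard := fun m₀ p₀ =>
      Set.ncard_le_ncard (fun x hx => lhs_subset_LSupp hx.1) (LSupp_finite L)
    by_cases hsup : ∃ i, v ∈ (p i).w.support
    · obtain ⟨i, hvi⟩ := hsup
      by_cases hvA : v ∈ A
      · -- replace path `i` by the trivial path at `v`
        have hva : v = (p i).a := honly i v hvi hvA
        have hbA : (p i).b ∉ A := by
          intro h
          have hba := honly i (p i).b ((p i).w.end_mem_support) h
          exact hvb i (hva.trans hba.symm)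
        have hbq : (p i).b ∉ (Walk.nil : G.Walk v v).support := by
          rw [Walk.support_nil, List.mem_singleton]
          exact fun h => hvb i h.symm
        obtain ⟨p', h1, h2, h3, h4, h5, hlt⟩ :=
          update_step L A p i hpath ha honly hdisj hinv ⟨v, v, Walk.nil⟩
            Walk.IsPath.nil hvA
            (fun u hu _ => by
              rw [Walk.support_nil, List.mem_singleton] at hu; exact hu)
            (fun u hu => by
              rw [Walk.support_nil, List.mem_singleton] at hu; exact hu ▸ hvi)
            hvl hbA hbq
        have hmeas' := meas_lt hlt (hviolbound m p') hmeas
        obtain ⟨m', hm', hc⟩ := IH _ hmeas' m p' h1 h2 h3 h4 h5 (le_refl _)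
        exact ⟨m', hm', hc⟩
      · -- truncate path `i` at `v`
        have hvnb : v ≠ (p i).b := hvb i
        have hbA : (p i).b ∉ A := by
          intro h
          have hba := honly i (p i).b ((p i).w.end_mem_support) h
          have hsing := support_eq_single (p i).w (hpath i) hba.symm
          rw [hsing, List.mem_singleton] at hvi
          exact hvA (hvi ▸ ha i)
        obtain ⟨p', h1, h2, h3, h4, h5, hlt⟩ :=
          update_step L A p i hpath ha honly hdisj hinv
            ⟨(p i).a, v, (p i).w.takeUntil v hvi⟩
            ((hpath i).takeUntil _) (ha i)
            (fun u hu huA => honly i u (Walk.support_takeUntil_subset _ _ hu) huA)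
            (fun u hu => Walk.support_takeUntil_subset _ _ hu)
            hvl hbA (end_not_mem_takeUntil (p i).w (hpath i) hvi hvnb)
        have hmeas' := meas_lt hlt (hviolbound m p') hmeas
        obtain ⟨m', hm', hc⟩ := IH _ hmeas' m p' h1 h2 h3 h4 h5 (le_refl _)
        exact ⟨m', hm', hc⟩
    · -- add the trivial path at `v`
      have hvA : v ∈ A := by
        rcases hvU with h | h
        · exact absurd (mem_famSupp.mp h) hsup
        · exact h
      set p' : Fin (m + 1) → APath G := Fin.cons ⟨v, v, Walk.nil⟩ p with hp'
      have hp0 : p' 0 = ⟨v, v, Walk.nil⟩ := by rw [hp']; simp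
      have hpsucc : ∀ j : Fin m, p' j.succ = p j := fun j => by rw [hp']; simp
      have hsupp0 : (p' 0).w.support = [v] := by rw [hp0]; rfl
      have hpath' : ∀ k, (p' k).w.IsPath := by
        intro k
        rcases Fin.eq_zero_or_eq_succ k with rfl | ⟨j, rfl⟩
        · rw [hp0]; exact Walk.IsPath.nil
        · rw [hpsucc]; exact hpath j
      have ha' : ∀ k, (p' k).a ∈ A := by
        intro k
        rcases Fin.eq_zero_or_eq_succ k with rfl | ⟨j, rfl⟩
        · rw [hp0]; exact hvA
        · rw [hpsucc]; exact ha j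
      have honly' : ∀ k u, u ∈ (p' k).w.support → u ∈ A → u = (p' k).a := by
        intro k u hu huA
        rcases Fin.eq_zero_or_eq_succ k with rfl | ⟨j, rfl⟩
        · rw [hsupp0, List.mem_singleton] at hu
          rw [hp0]; exact hu
        · rw [hpsucc] at hu ⊢; exact honly j u hu huA
      have hdisj' : ∀ k l, k ≠ l → ∀ u, u ∈ (p' k).w.support → u ∉ (p' l).w.support := by
        intro k l hkl u hu hul
        rcases Fin.eq_zero_or_eq_succ k with rfl | ⟨j, rfl⟩ <;>
          rcases Fin.eq_zero_or_eq_succ l with rfl | ⟨j', rfl⟩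
        · exact hkl rfl
        · rw [hsupp0, List.mem_singleton] at hu
          subst hu
          rw [hpsucc] at hul
          exact hsup ⟨j', hul⟩
        · rw [hsupp0, List.mem_singleton] at hul
          subst hul
          rw [hpsucc] at hu
          exact hsup ⟨j, hu⟩
        · rw [hpsucc] at hu hul
          exact hdisj j j' (fun h => hkl (by rw [h])) u hu hul
      have hfs : famSupp p' = {v} ∪ famSupp p := by
        ext u
        simp only [Set.mem_union, Set.mem_singleton_iff, mem_famSupp]
        constructor
        · rintro ⟨k, hk⟩
          rcases Fin.eq_zero_or_eq_succ k with rfl | ⟨j, rfl⟩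
          · rw [hsupp0, List.mem_singleton] at hk; exact Or.inl hk
          · rw [hpsucc] at hk; exact Or.inr ⟨j, hk⟩
        · rintro (rfl | ⟨k, hk⟩)
          · exact ⟨0, by rw [hsupp0]; simp⟩
          · exact ⟨k.succ, by rw [hpsucc]; exact hk⟩
      have hUeq : famSupp p' ∪ A = famSupp p ∪ A := by
        rw [hfs]
        ext u
        simp only [Set.mem_union, Set.mem_singleton_iff]
        constructor
        · rintro ((rfl | h) | h)
          exacts [Or.inr hvA, Or.inl h, Or.inr h]
        · rintro (h | h)
          exacts [Or.inl (Or.inr h), Or.inr h]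
      have hdiffeq : famSupp p' \ A = famSupp p \ A := by
        rw [hfs, Set.union_diff_distrib,
          Set.diff_eq_empty.mpr (Set.singleton_subset_iff.mpr hvA), Set.empty_union]
      have hrange : (Set.range fun k => (p' k).b)
          = insert v (Set.range fun k => (p k).b) := by
        have hfeq : (fun k => (p' k).b) = Fin.cons v (fun k => (p k).b) := by
          funext k
          rcases Fin.eq_zero_or_eq_succ k with rfl | ⟨j, rfl⟩
          · rw [hp0]; simp
          · rw [hpsucc]; simp
        rw [hfeq, Fin.range_cons]
      have hinv' : ∀ k, (p' k).b ∈ lhsSet L (famSupp p' ∪ A) := by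
        intro k
        rw [hUeq]
        rcases Fin.eq_zero_or_eq_succ k with rfl | ⟨j, rfl⟩
        · rw [hp0]; exact hvl
        · rw [hpsucc]; exact hinv j
      have hviolfin : ((lhsSet L (famSupp p ∪ A)) \ Set.range fun k => (p k).b).Finite :=
        (LSupp_finite L).subset fun x hx => lhs_subset_LSupp hx.1
      have hssub : (lhsSet L (famSupp p ∪ A)) \ insert v (Set.range fun k => (p k).b)
          ⊂ (lhsSet L (famSupp p ∪ A)) \ Set.range fun k => (p k).b := by
        constructor
        · intro x hx
          exact ⟨hx.1, fun h => hx.2 (Set.mem_insert_iff.mpr (Or.inr h))⟩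
        · intro hcon
          exact (hcon ⟨hvl, hvr⟩).2 (Set.mem_insert v _)
      have hlt2 := Set.ncard_lt_ncard hssub hviolfin
      have hmeas' : (famSupp p' \ A).ncard * ((LSupp L).ncard + 1)
          + ((lhsSet L (famSupp p' ∪ A)) \ Set.range fun k => (p' k).b).ncard < n := by
        rw [hdiffeq, hUeq, hrange]
        exact lt_of_lt_of_le
          (Nat.add_lt_add_left hlt2 ((famSupp p \ A).ncard * ((LSupp L).ncard + 1))) hmeas
      obtain ⟨m', hm', hc⟩ := IH _ hmeas' (m + 1) p' hpath' ha' honly' hdisj' hinv' (le_refl _)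
      exact ⟨m', le_trans (Nat.le_succ m) hm', hc⟩

end Stmt6Aux

/-- If `G` contains `t` disjoint `H`–`(X ∪ Y)` paths (with `A` the vertex set of the
subgraph `H`) and `L` is an `X`–`Y` linkage, then `G` contains an `H`–`L` comb of at least `t`
paths. -/
theorem stmt6 {V : Type} {G : SimpleGraph V} {X Y : Set V} {t' : ℕ}
    (L : Linkage G X Y t') (A : Set V) (t : ℕ)
    (hpaths : ∃ (e₁ e₂ : Fin t → V) (w : ∀ i, G.Walk (e₁ i) (e₂ i)),
      (∀ i, (w i).IsPath) ∧ (∀ i, e₁ i ∈ A) ∧ (∀ i, e₂ i ∈ X ∪ Y) ∧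
      (∀ i v, v ∈ (w i).support → v ∈ A → v = e₁ i) ∧
      (∀ i v, v ∈ (w i).support → v ∈ X ∪ Y → v = e₂ i) ∧
      (∀ i j, i ≠ j → ∀ v, v ∈ (w i).support → v ∉ (w j).support)) :
    ∃ m : ℕ, t ≤ m ∧ Nonempty (Comb A L m) := by
  classical
  obtain ⟨e₁, e₂, w, hw, he₁, he₂, hA, hXY, hdisj⟩ := hpaths
  set p : Fin t → Stmt6Aux.APath G := fun i => ⟨e₁ i, e₂ i, w i⟩ with hp
  have hinv : ∀ k, (p k).b ∈ Stmt6Aux.lhsSet L (Stmt6Aux.famSupp p ∪ A) := by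
    intro k
    have hkU : e₂ k ∈ Stmt6Aux.famSupp p ∪ A :=
      Or.inl (Stmt6Aux.mem_famSupp.mpr ⟨k, (w k).end_mem_support⟩)
    rcases he₂ k with hx | hy
    · obtain ⟨j, hj⟩ := L.coverX _ hx
      refine ⟨j, Or.inl ⟨[], (L.walk j).support.tail, ?_, hkU, by simp⟩⟩
      show (L.walk j).support = [] ++ e₂ k :: (L.walk j).support.tail
      rw [List.nil_append, ← hj]
      exact SimpleGraph.Walk.support_eq_cons _
    · obtain ⟨j, hj⟩ := L.coverY _ hy
      refine ⟨j, Or.inr ⟨[], (L.walk j).reverse.support.tail, ?_, hkU, by simp⟩⟩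
      show (L.walk j).support.reverse = [] ++ e₂ k :: (L.walk j).reverse.support.tail
      rw [List.nil_append, ← SimpleGraph.Walk.support_reverse, ← hj]
      exact SimpleGraph.Walk.support_eq_cons _
  exact Stmt6Aux.key L A _ t p hw he₁ hA hdisj hinv (le_refl _)
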